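/- Let G be the 2-edge-colored graph with vertices v_1,…,v_8, blue edges v_2v_3, v_4v_5, v_6v_7 and red edges v_1v_2, v_1v_3, v_1v_5, v_2v_6, v_3v_4, v_4v_6, v_5v_8, v_7v_8, and let x = v_1, y = v_8. Then G is PC acyclic of type 3, the maximum number of internally vertex-disjoint PC paths between x and y is 1, yet for every vertex v ∉ {x,y} the graph G − v still contains a PC path between x and y (so no single-vertex set separates all PC x–y paths, and Menger's equality fails for PC paths on graphs that are PC acyclic of type 3). -/

import Mathlib

open SimpleGraph

variable {V : Type*} {c : ℕ}

/-- The list of colors of the edges of a walk, in order. -/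
def colorList (G : SimpleGraph V) (col : V → V → Fin c) {u v : V} (w : G.Walk u v) :
    List (Fin c) :=
  w.darts.map fun d => col d.toProd.1 d.toProd.2

/-- A walk is properly colored (as an open walk): consecutive edges have different colors. -/
def IsPCOpen (G : SimpleGraph V) (col : V → V → Fin c) {u v : V} (w : G.Walk u v) : Prop :=
  (colorList G col w).Chain' (· ≠ ·)

/-- A closed walk is properly colored: consecutive edges have different colors,
including the last versus the first edge. -/
def IsPCClosed (G : SimpleGraph V) (col : V → V → Fin c) {u : V} (w : G.Walk u u) : Prop :=
  (colorList G col w ++ (colorList G col w).take 1).Chain' (· ≠ ·)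

/-- `G` (with coloring `col`) has a properly colored cycle. -/
def HasPCCycle (G : SimpleGraph V) (col : V → V → Fin c) : Prop :=
  ∃ (u : V) (w : G.Walk u u), w.IsCycle ∧ IsPCClosed G col w

/-- `G` (with coloring `col`) has a properly colored closed trail. -/
def HasPCClosedTrail (G : SimpleGraph V) (col : V → V → Fin c) : Prop :=
  ∃ (u : V) (w : G.Walk u u), w.IsCircuit ∧ IsPCClosed G col w

/-- `G` (with coloring `col`) has a properly colored closed walk. -/
def HasPCClosedWalk (G : SimpleGraph V) (col : V → V → Fin c) : Prop :=
  ∃ (u : V) (w : G.Walk u u), 0 < w.length ∧ IsPCClosed G col w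

/-- A vertex all of whose incident edges have the same color. -/
def MonoVertex (G : SimpleGraph V) (col : V → V → Fin c) (z : V) : Prop :=
  ∀ v w, G.Adj z v → G.Adj z w → col z v = col z w

/-- An ordering (given by an injective ranking `r`) is of type 1 if every vertex sends
edges of only one color into each connected component of the subgraph induced by the
later vertices. -/
def Ordering1 (G : SimpleGraph V) (col : V → V → Fin c) (r : V → ℕ) : Prop :=
  ∀ (u v w : V) (hv : G.Adj u v) (hw : G.Adj u w) (hrv : r u < r v) (hrw : r u < r w),
    (G.induce {x | r u < r x}).Reachable ⟨v, hrv⟩ ⟨w, hrw⟩ → col u v = col u w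

/-- Type 2: all edges from a vertex to later vertices which are not bridges in the
subgraph induced by the vertex together with the later vertices have the same color. -/
def Ordering2 (G : SimpleGraph V) (col : V → V → Fin c) (r : V → ℕ) : Prop :=
  ∀ (u v w : V) (hv : G.Adj u v) (hw : G.Adj u w) (hrv : r u < r v) (hrw : r u < r w),
    ¬ (G.induce {x | r u ≤ r x}).IsBridge s(⟨u, le_refl (r u)⟩, ⟨v, hrv.le⟩) →
    ¬ (G.induce {x | r u ≤ r x}).IsBridge s(⟨u, le_refl (r u)⟩, ⟨w, hrw.le⟩) →
    col u v = col u w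

/-- Type 3: all edges from a vertex to later vertices have the same color. -/
def Ordering3 (G : SimpleGraph V) (col : V → V → Fin c) (r : V → ℕ) : Prop :=
  ∀ u v w : V, G.Adj u v → G.Adj u w → r u < r v → r u < r w → col u v = col u w

/-- Type 4: all edges to later vertices have the same color and all edges to earlier
vertices have the same color. -/
def Ordering4 (G : SimpleGraph V) (col : V → V → Fin c) (r : V → ℕ) : Prop :=
  Ordering3 G col r ∧
    ∀ u v w : V, G.Adj u v → G.Adj u w → r v < r u → r w < r u → col u v = col u w

/-- Type 5: type 4, and additionally the color towards earlier vertices differs from the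
color towards later vertices. -/
def Ordering5 (G : SimpleGraph V) (col : V → V → Fin c) (r : V → ℕ) : Prop :=
  Ordering4 G col r ∧
    ∀ u v w : V, G.Adj u v → G.Adj u w → r v < r u → r u < r w → col u v ≠ col u w

def PCAcyclic1 (G : SimpleGraph V) (col : V → V → Fin c) : Prop :=
  ∃ r : V → ℕ, Function.Injective r ∧ Ordering1 G col r

def PCAcyclic2 (G : SimpleGraph V) (col : V → V → Fin c) : Prop :=
  ∃ r : V → ℕ, Function.Injective r ∧ Ordering2 G col r

def PCAcyclic3 (G : SimpleGraph V) (col : V → V → Fin c) : Prop :=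
  ∃ r : V → ℕ, Function.Injective r ∧ Ordering3 G col r

def PCAcyclic4 (G : SimpleGraph V) (col : V → V → Fin c) : Prop :=
  ∃ r : V → ℕ, Function.Injective r ∧ Ordering4 G col r

def PCAcyclic5 (G : SimpleGraph V) (col : V → V → Fin c) : Prop :=
  ∃ r : V → ℕ, Function.Injective r ∧ Ordering5 G col r

/-- The number of `C`-monochromatic vertices of a closed walk `C`: vertices whose two
incident edges on `C` (cyclically) have the same color. -/
def monoCount (G : SimpleGraph V) (col : V → V → Fin c) {u : V} (w : G.Walk u u) : ℕ :=
  ((colorList G col w ++ (colorList G col w).take 1).zip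
      (colorList G col w ++ (colorList G col w).take 1).tail).countP
    fun p => decide (p.1 = p.2)

/-- The number of vertices of a closed walk `C` that are not `C`-monochromatic. -/
def nonMonoCount (G : SimpleGraph V) (col : V → V → Fin c) {u : V} (w : G.Walk u u) : ℕ :=
  ((colorList G col w ++ (colorList G col w).take 1).zip
      (colorList G col w ++ (colorList G col w).take 1).tail).countP
    fun p => decide (p.1 ≠ p.2)

/-- The graph on vertices `v₁, …, v₈` (encoded as `0, …, 7 : Fin 8`) with blue edges
`v₂v₃, v₄v₅, v₆v₇` and red edges `v₁v₂, v₁v₃, v₁v₅, v₂v₆, v₃v₄, v₄v₆, v₅v₈, v₇v₈`. -/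
def G18 : SimpleGraph (Fin 8) :=
  SimpleGraph.fromEdgeSet
    {s(1, 2), s(3, 4), s(5, 6),
     s(0, 1), s(0, 2), s(0, 4), s(1, 5), s(2, 3), s(3, 5), s(4, 7), s(6, 7)}

/-- Blue is color `1`, red is color `0`. -/
def col18 : Fin 8 → Fin 8 → Fin 2 := fun a b =>
  if s(a, b) = s(1, 2) ∨ s(a, b) = s(3, 4) ∨ s(a, b) = s(5, 6) then 1 else 0

/-! ### Auxiliary material for the proof -/

instance G18.adjDecidable : DecidableRel G18.Adj := fun a b =>
  decidable_of_iff ((s(a,b) = s(1,2) ∨ s(a,b) = s(3,4) ∨ s(a,b) = s(5,6) ∨ s(a,b) = s(0,1) ∨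
    s(a,b) = s(0,2) ∨ s(a,b) = s(0,4) ∨ s(a,b) = s(1,5) ∨ s(a,b) = s(2,3) ∨ s(a,b) = s(3,5) ∨
    s(a,b) = s(4,7) ∨ s(a,b) = s(6,7)) ∧ a ≠ b)
    (by simp [G18, fromEdgeSet_adj, Set.mem_insert_iff, Set.mem_singleton_iff])

/-- Explicit walk `0-1-2-3-4-7`. -/
def W1 : G18.Walk 0 7 :=
  Walk.cons (v := 1) (by decide) (Walk.cons (v := 2) (by decide) (Walk.cons (v := 3) (by decide)
    (Walk.cons (v := 4) (by decide) (Walk.cons (v := 7) (by decide) Walk.nil))))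

/-- Explicit walk `0-2-1-5-6-7`. -/
def W2 : G18.Walk 0 7 :=
  Walk.cons (v := 2) (by decide) (Walk.cons (v := 1) (by decide) (Walk.cons (v := 5) (by decide)
    (Walk.cons (v := 6) (by decide) (Walk.cons (v := 7) (by decide) Walk.nil))))

/-- Explicit walk `0-4-3-5-6-7`. -/
def W4 : G18.Walk 0 7 :=
  Walk.cons (v := 4) (by decide) (Walk.cons (v := 3) (by decide) (Walk.cons (v := 5) (by decide)
    (Walk.cons (v := 6) (by decide) (Walk.cons (v := 7) (by decide) Walk.nil))))

lemma colorList_eq_zip {u v : Fin 8} (p : G18.Walk u v) :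
    colorList G18 col18 p = (p.support.zip p.support.tail).map fun q => col18 q.1 q.2 := by
  induction p with
  | nil => simp [colorList]
  | @cons a b c h q ih =>
    have hs := q.support_eq_cons
    rw [Walk.support_cons]
    show col18 a b :: colorList G18 col18 q = _
    rw [ih, hs]
    simp only [List.tail_cons, List.zip_cons_cons, List.map_cons]

lemma getLast?_support : ∀ {u v : Fin 8} (p : G18.Walk u v), p.support.getLast? = some v := by
  intro u v p
  induction p with
  | nil => simp
  | cons h q ih =>
    rw [Walk.support_cons, List.getLast?_cons, ih]
    simp

lemma support_inj : ∀ {u v : Fin 8} (p q : G18.Walk u v), p.support = q.support → p = q := by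
  intro u v p
  induction p with
  | nil =>
    intro q hq
    cases q with
    | nil => rfl
    | cons h q' =>
      rw [Walk.support_nil, Walk.support_cons, q'.support_eq_cons] at hq
      simp at hq
  | @cons a b c h p' ih =>
    intro q hq
    cases q with
    | nil =>
      rw [Walk.support_nil, Walk.support_cons, p'.support_eq_cons] at hq
      simp at hq
    | @cons a' b' c' h' q' =>
      rw [Walk.support_cons, Walk.support_cons] at hq
      have hq' : p'.support = q'.support := List.tail_eq_of_cons_eq hq
      have hb : b = b' := by
        have h1 := p'.support_eq_cons
        have h2 := q'.support_eq_cons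
        rw [h1, h2] at hq'
        exact List.head_eq_of_cons_eq hq'
      subst hb
      rw [ih q' hq']

/-- A decision procedure for `Chain' (· ≠ ·)` that reduces well in the kernel. -/
def chainNe : List (Fin 2) → Bool
  | [] => true
  | [_] => true
  | a :: b :: l => a ≠ b && chainNe (b :: l)

lemma chain'_iff_chainNe : ∀ l : List (Fin 2), l.Chain' (· ≠ ·) ↔ chainNe l = true := by
  intro l
  induction l with
  | nil => simp [chainNe, List.Chain']
  | cons a l ih =>
    cases l with
    | nil => simp [chainNe, List.Chain']
    | cons b t => simp only [List.Chain'] at ih ⊢; simp [chainNe, List.isChain_cons_cons, ih, and_comm]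

instance decChainNe (l : List (Fin 2)) : Decidable (l.Chain' (· ≠ ·)) :=
  decidable_of_iff _ (chain'_iff_chainNe l).symm

/-- All supports of simple paths in `G18` starting at `u`, with at most `n` edges,
avoiding the vertices in `vis`. -/
def plist : ℕ → Fin 8 → List (Fin 8) → List (List (Fin 8))
  | 0, u, _ => [[u]]
  | (n+1), u, vis => [u] ::
      (List.finRange 8).flatMap fun a =>
        if G18.Adj u a ∧ a ∉ vis then (plist n a (u :: vis)).map (u :: ·) else []

lemma support_mem_plist : ∀ (n : ℕ) {u v : Fin 8} (p : G18.Walk u v) (vis : List (Fin 8)),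
    p.length ≤ n → p.support.Nodup → (∀ x ∈ vis, x ∉ p.support) →
    p.support ∈ plist n u vis := by
  intro n
  induction n with
  | zero =>
    intro u v p vis hp _ _
    cases p with
    | nil => simp [plist]
    | cons h q => simp [Walk.length_cons] at hp
  | succ n ih =>
    intro u v p vis hp hnd hdisj
    cases p with
    | nil => simp [plist]
    | cons h q =>
      rename_i b
      simp only [Walk.length_cons, Nat.add_le_add_iff_right] at hp
      rw [Walk.support_cons] at hnd hdisj ⊢
      simp only [plist, List.mem_cons, List.mem_flatMap]
      refine Or.inr ⟨b, List.mem_finRange _, ?_⟩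
      have hb : b ∉ vis := fun hb => hdisj b hb (by simp [q.start_mem_support])
      rw [if_pos ⟨h, hb⟩]
      refine List.mem_map_of_mem (ih q (u :: vis) hp (List.nodup_cons.mp hnd).2 ?_)
      intro x hx
      rcases List.mem_cons.mp hx with rfl | hx
      · exact (List.nodup_cons.mp hnd).1
      · exact fun hs => hdisj x hx (List.mem_cons_of_mem _ hs)

set_option maxRecDepth 10000 in
set_option maxHeartbeats 4000000 in
lemma classify_aux : ∀ l ∈ plist 7 (0 : Fin 8) [], l.getLast? = some 7 →
    ((l.zip l.tail).map fun q => col18 q.1 q.2).Chain' (· ≠ ·) →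
    l = [0,1,2,3,4,7] ∨ l = [0,2,1,5,6,7] ∨
    l = [0,4,3,2,1,5,6,7] ∨ l = [0,4,3,5,6,7] := by decide

lemma classify {p : G18.Walk 0 7} (hp : p.IsPath) (hpc : IsPCOpen G18 col18 p) :
    p.support = [0,1,2,3,4,7] ∨ p.support = [0,2,1,5,6,7] ∨
    p.support = [0,4,3,2,1,5,6,7] ∨ p.support = [0,4,3,5,6,7] := by
  refine classify_aux p.support
    (support_mem_plist 7 p [] (by have := hp.length_lt; simp at this; omega)
      (p.isPath_def.mp hp) (by simp))
    (getLast?_support p) ?_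
  rw [← colorList_eq_zip]
  exact hpc

/-- The type-3 ranking. -/
def r18 : Fin 8 → ℕ := ![0, 5, 4, 3, 2, 6, 7, 1]

instance : Decidable (Ordering3 G18 col18 r18) :=
  inferInstanceAs (Decidable (∀ u v w : Fin 8, G18.Adj u v → G18.Adj u w →
    r18 u < r18 v → r18 u < r18 w → col18 u v = col18 u w))

/-- With `x = v₁` and `y = v₈`, this 2-edge-colored graph is PC acyclic
of type 3; there is a PC path between `x` and `y` but no two distinct internally
vertex-disjoint PC paths between them; yet deleting any single vertex other than `x, y`
leaves a PC path between `x` and `y`.  Hence Menger's equality fails for PC paths on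
graphs PC acyclic of type 3. -/
theorem menger_fails_type3_example :
    PCAcyclic3 G18 col18 ∧
      (∃ p : G18.Walk 0 7, p.IsPath ∧ IsPCOpen G18 col18 p) ∧
      (¬ ∃ p q : G18.Walk 0 7, p ≠ q ∧
          (p.IsPath ∧ IsPCOpen G18 col18 p) ∧ (q.IsPath ∧ IsPCOpen G18 col18 q) ∧
          ∀ v : Fin 8, v ∈ p.support → v ∈ q.support → v = 0 ∨ v = 7) ∧
      ∀ v : Fin 8, v ≠ 0 → v ≠ 7 →
        ∃ p : G18.Walk 0 7, p.IsPath ∧ IsPCOpen G18 col18 p ∧ v ∉ p.support := by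
  have hW1 : W1.IsPath ∧ IsPCOpen G18 col18 W1 :=
    ⟨W1.isPath_def.mpr (by decide), by unfold IsPCOpen colorList; decide⟩
  have hW2 : W2.IsPath ∧ IsPCOpen G18 col18 W2 :=
    ⟨W2.isPath_def.mpr (by decide), by unfold IsPCOpen colorList; decide⟩
  have hW4 : W4.IsPath ∧ IsPCOpen G18 col18 W4 :=
    ⟨W4.isPath_def.mpr (by decide), by unfold IsPCOpen colorList; decide⟩
  refine ⟨⟨r18, by decide, by decide⟩, ⟨W1, hW1⟩, ?_, ?_⟩
  · rintro ⟨p, q, hne, ⟨hp, hpc⟩, ⟨hq, hqc⟩, hdisj⟩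
    have sp := classify hp hpc
    have sq := classify hq hqc
    rcases sp with sp | sp | sp | sp <;> rcases sq with sq | sq | sq | sq <;>
      first
        | exact hne (support_inj p q (sp.trans sq.symm))
        | exact absurd (hdisj 1 (by rw [sp]; decide) (by rw [sq]; decide)) (by decide)
        | exact absurd (hdisj 3 (by rw [sp]; decide) (by rw [sq]; decide)) (by decide)
        | exact absurd (hdisj 5 (by rw [sp]; decide) (by rw [sq]; decide)) (by decide)
  · intro v hv0 hv7
    fin_cases v
    · exact absurd rfl hv0
    · exact ⟨W4, hW4.1, hW4.2, by decide⟩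
    · exact ⟨W4, hW4.1, hW4.2, by decide⟩
    · exact ⟨W2, hW2.1, hW2.2, by decide⟩
    · exact ⟨W2, hW2.1, hW2.2, by decide⟩
    · exact ⟨W1, hW1.1, hW1.2, by decide⟩
    · exact ⟨W1, hW1.1, hW1.2, by decide⟩
    · exact absurd rfl hv7
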